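/- The set of quadratic moves B = { e_{γ_odd} + e_{γ_even} − e_α − e_β : {α, β} a nonsorted pair of admissible tuples } is a minimal Markov basis: for every move z_0 ∈ B there exist frequency vectors x, y : V → ℕ with Σ_{α} x(α) f(α) = Σ_{α} y(α) f(α) (where f(α)_j = #{ k : α_k = j }) that cannot be connected by any finite sequence of steps ±z with z ∈ B \ {z_0} staying within the nonnegative integer vectors on V. -/

import Mathlib

open MvPolynomial Finset

variable (τ d M : ℕ) (b c s r : Fin M → ℕ)

/-- A tuple α = (α_1,…,α_τ) with entries in {1,…,d} is admissible if it is
weakly increasing and for every i ∈ {1,…,M}, c_i ≤ #{k : s_i ≤ α_k ≤ r_i} ≤ b_i. -/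
structure Admissible (α : Fin τ → ℕ) : Prop where
  mono : Monotone α
  mem : ∀ k, 1 ≤ α k ∧ α k ≤ d
  count : ∀ i : Fin M,
    c i ≤ (Finset.univ.filter fun k : Fin τ => s i ≤ α k ∧ α k ≤ r i).card ∧
    (Finset.univ.filter fun k : Fin τ => s i ≤ α k ∧ α k ≤ r i).card ≤ b i

/-- `IsSplit α β γodd γeven` : γodd and γeven are the odd- and even-position
subsequences of the weakly increasing rearrangement γ of the 2τ entries of α and β. -/
def IsSplit {τ : ℕ} (α β γodd γeven : Fin τ → ℕ) : Prop :=
  ∃ γ : Fin (2 * τ) → ℕ, Monotone γ ∧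
    ((List.ofFn γ : List ℕ) : Multiset ℕ)
      = ((List.ofFn α ++ List.ofFn β : List ℕ) : Multiset ℕ) ∧
    ∀ t : Fin τ, γodd t = γ ⟨2 * t.1, by have := t.isLt; omega⟩ ∧
      γeven t = γ ⟨2 * t.1 + 1, by have := t.isLt; omega⟩

/-- The pair (α, β), in this order, is sorted: α_1 ≤ β_1 ≤ α_2 ≤ β_2 ≤ ⋯ ≤ α_τ ≤ β_τ. -/
def PairOrdered {τ : ℕ} (α β : Fin τ → ℕ) : Prop :=
  (∀ t, α t ≤ β t) ∧ ∀ t t' : Fin τ, t.1 + 1 = t'.1 → β t ≤ α t'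

/-- The pair {α, β} is nonsorted: neither (α, β) nor (β, α) is sorted. -/
def Nonsorted {τ : ℕ} (α β : Fin τ → ℕ) : Prop :=
  ¬ (PairOrdered α β ∨ PairOrdered β α)

/-- The toric (Segre–Veronese) homomorphism π with π(y_α) = q_{α_1} ⋯ q_{α_τ},
where q_1, …, q_d are the variables of `MvPolynomial (Fin d) K` (the 1-based
entry j of α corresponds to the variable indexed by j − 1 : Fin d). -/
noncomputable def piSV (K : Type*) [Field K] :
    MvPolynomial {x : Fin τ → ℕ // Admissible τ d M b c s r x} K →ₐ[K]
      MvPolynomial (Fin d) K :=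
  aeval fun v => ∏ k : Fin τ, X (⟨v.1 k - 1, by have := v.2.mem k; omega⟩ : Fin d)

/-- The quadratic move e_{γodd} + e_{γeven} − e_α − e_β. -/
def QuadMove {V : Type*} [DecidableEq V] (α β γodd γeven : V) : V → ℤ := fun v =>
  (if v = γodd then 1 else 0) + (if v = γeven then 1 else 0)
    - (if v = α then 1 else 0) - (if v = β then 1 else 0)


section AuxLemmas

lemma mono_eq_of_multiset {n : ℕ} {f g : Fin n → ℕ} (hf : Monotone f) (hg : Monotone g)
    (h : ((List.ofFn f : List ℕ) : Multiset ℕ) = ((List.ofFn g : List ℕ) : Multiset ℕ)) :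
    f = g :=
  List.ofFn_injective <| List.Perm.eq_of_sortedLE
    (List.sortedLE_ofFn_iff.mpr hf) (List.sortedLE_ofFn_iff.mpr hg) (Multiset.coe_eq_coe.mp h)

lemma count_ofFn' {n : ℕ} (f : Fin n → ℕ) (j : ℕ) :
    Multiset.count j ((List.ofFn f : List ℕ) : Multiset ℕ)
      = (Finset.univ.filter fun k : Fin n => f k = j).card := by
  rw [← Fin.univ_val_map, Multiset.count_map, Finset.card_def, Finset.filter_val]
  congr 1
  exact Multiset.filter_congr fun k _ => eq_comm

lemma sum_range_two_mul {M : Type*} [AddCommMonoid M] (n : ℕ) (g : ℕ → M) :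
    ∑ u ∈ Finset.range (2 * n), g u = ∑ t ∈ Finset.range n, (g (2 * t) + g (2 * t + 1)) := by
  induction n with
  | zero => simp
  | succ m ih =>
    rw [Nat.mul_succ, Finset.sum_range_succ, Finset.sum_range_succ, Finset.sum_range_succ, ih]
    rw [add_assoc]

lemma sum_fin_two_mul {n : ℕ} (g : Fin (2 * n) → ℕ) :
    ∑ u : Fin (2 * n), g u
      = ∑ t : Fin n, (g ⟨2 * t.1, by omega⟩ + g ⟨2 * t.1 + 1, by omega⟩) := by
  set G : ℕ → ℕ := fun u => if h : u < 2 * n then g ⟨u, h⟩ else 0 with hG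
  have h1 : ∑ u : Fin (2 * n), g u = ∑ u ∈ Finset.range (2 * n), G u := by
    rw [← Fin.sum_univ_eq_sum_range]
    exact Finset.sum_congr rfl fun u _ => by simp [hG, u.isLt]
  have h2 : ∑ t : Fin n, (g ⟨2 * t.1, by omega⟩ + g ⟨2 * t.1 + 1, by omega⟩)
      = ∑ t ∈ Finset.range n, (G (2 * t) + G (2 * t + 1)) := by
    rw [← Fin.sum_univ_eq_sum_range (fun t => G (2 * t) + G (2 * t + 1)) n]
    refine Finset.sum_congr rfl fun t _ => ?_
    have h1' : 2 * t.1 < 2 * n := by omega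
    have h2' : 2 * t.1 + 1 < 2 * n := by omega
    simp [hG, h1', h2']
  rw [h1, h2, sum_range_two_mul]

/-- Counts split across a split. -/
lemma split_count {τ : ℕ} {α β godd geven : Fin τ → ℕ} (h : IsSplit α β godd geven) (j : ℕ) :
    (Finset.univ.filter fun k => godd k = j).card
      + (Finset.univ.filter fun k => geven k = j).card
    = (Finset.univ.filter fun k => α k = j).card
      + (Finset.univ.filter fun k => β k = j).card := by
  obtain ⟨γ, hmono, hms, hform⟩ := h
  have hγ : (Finset.univ.filter fun u : Fin (2 * τ) => γ u = j).card
      = (Finset.univ.filter fun k => α k = j).card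
        + (Finset.univ.filter fun k => β k = j).card := by
    rw [← count_ofFn', ← count_ofFn', ← count_ofFn', hms]
    simp [Multiset.count_add]
  rw [← hγ]
  rw [Finset.card_filter, Finset.card_filter, Finset.card_filter, sum_fin_two_mul]
  rw [← Finset.sum_add_distrib]
  refine Finset.sum_congr rfl fun t _ => ?_
  rw [(hform t).1, (hform t).2]

lemma split_ordered {τ : ℕ} {α β godd geven : Fin τ → ℕ} (h : IsSplit α β godd geven) :
    PairOrdered godd geven := by
  obtain ⟨γ, hmono, -, hform⟩ := h
  constructor
  · intro t
    rw [(hform t).1, (hform t).2]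
    exact hmono (Fin.mk_le_mk.mpr (by omega))
  · intro t t' htt
    rw [(hform t).2, (hform t').1]
    exact hmono (Fin.mk_le_mk.mpr (by omega))

lemma pairOrdered_self {τ : ℕ} {α : Fin τ → ℕ} (h : Monotone α) : PairOrdered α α :=
  ⟨fun _ => le_rfl, fun t t' htt => h (Fin.le_def.mpr (by omega))⟩

lemma nonsorted_ne {τ : ℕ} {α β : Fin τ → ℕ} (hm : Monotone α) (h : Nonsorted α β) : α ≠ β := by
  rintro rfl
  exact h (Or.inl (pairOrdered_self hm))

/-- Split multiset identity as multisets of lists. -/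
lemma split_multiset {τ : ℕ} {α β godd geven : Fin τ → ℕ} (h : IsSplit α β godd geven) :
    ((List.ofFn godd : List ℕ) : Multiset ℕ) + ((List.ofFn geven : List ℕ) : Multiset ℕ)
      = ((List.ofFn α : List ℕ) : Multiset ℕ) + ((List.ofFn β : List ℕ) : Multiset ℕ) := by
  ext j
  rw [Multiset.count_add, Multiset.count_add, count_ofFn', count_ofFn', count_ofFn', count_ofFn']
  exact split_count h j

/-- Members of a nonsorted pair differ from members of its split. -/
lemma nonsorted_ne_split {τ : ℕ} {α β godd geven : Fin τ → ℕ}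
    (hα : Monotone α) (hβ : Monotone β) (hgo : Monotone godd) (hge : Monotone geven)
    (hns : Nonsorted α β) (h : IsSplit α β godd geven) :
    α ≠ godd ∧ α ≠ geven ∧ β ≠ godd ∧ β ≠ geven := by
  have hsm := split_multiset h
  have hord := split_ordered h
  refine ⟨?_, ?_, ?_, ?_⟩
  · rintro rfl
    have : geven = β := mono_eq_of_multiset hge hβ (add_left_cancel hsm)
    exact hns (Or.inl (this ▸ hord))
  · rintro rfl
    rw [add_comm (((List.ofFn α : List ℕ) : Multiset ℕ))] at hsm
    have : godd = β := mono_eq_of_multiset hgo hβ (add_right_cancel hsm)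
    exact hns (Or.inr (this ▸ hord))
  · rintro rfl
    rw [add_comm (((List.ofFn β : List ℕ) : Multiset ℕ))
      (((List.ofFn geven : List ℕ) : Multiset ℕ))] at hsm
    have : geven = α := mono_eq_of_multiset hge hα (add_right_cancel hsm)
    exact hns (Or.inr (this ▸ hord))
  · rintro rfl
    have : godd = α := mono_eq_of_multiset hgo hα (add_right_cancel hsm)
    exact hns (Or.inl (this ▸ hord))

lemma quadmove_comm {V : Type*} [DecidableEq V] (a b g1 g2 : V) :
    QuadMove a b g1 g2 = QuadMove b a g1 g2 := by
  funext v
  simp only [QuadMove]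
  ring

/-- Uniqueness of the split. -/
lemma split_unique {τ : ℕ} {α β godd geven α' β' godd' geven' : Fin τ → ℕ}
    (h : IsSplit α β godd geven) (h' : IsSplit α' β' godd' geven')
    (hms : ((List.ofFn α' ++ List.ofFn β' : List ℕ) : Multiset ℕ)
      = ((List.ofFn α ++ List.ofFn β : List ℕ) : Multiset ℕ)) :
    godd' = godd ∧ geven' = geven := by
  obtain ⟨γ, hγm, hγms, hγf⟩ := h
  obtain ⟨γ', hγ'm, hγ'ms, hγ'f⟩ := h'
  have hγγ : γ' = γ := mono_eq_of_multiset hγ'm hγm (by rw [hγ'ms, hγms, hms])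
  constructor
  · funext t; rw [(hγ'f t).1, (hγf t).1, hγγ]
  · funext t; rw [(hγ'f t).2, (hγf t).2, hγγ]

end AuxLemmas

/-- the set B of quadratic moves
e_{γ_odd} + e_{γ_even} − e_α − e_β, over all nonsorted pairs {α, β} of
admissible tuples, is a minimal Markov basis: for every move z₀ ∈ B there
exist frequency vectors x, y : V → ℕ with the same sufficient statistic
(Σ_α x(α) f(α) = Σ_α y(α) f(α), where f(α)_j = #{k : α_k = j}) that cannot be
connected by any finite sequence of steps ±z with z ∈ B \ {z₀} staying within
the nonnegative integer vectors on V. -/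
theorem stmt_11 (hτ : 2 ≤ τ) (hd : 1 ≤ d) (hM : 1 ≤ M)
    (hcb : ∀ i, c i ≤ b i) (hs : ∀ i, 1 ≤ s i) (hsr : ∀ i, s i ≤ r i)
    (hrd : ∀ i, r i ≤ d)
    [Fintype {x : Fin τ → ℕ // Admissible τ d M b c s r x}]
    (z₀ : {x : Fin τ → ℕ // Admissible τ d M b c s r x} → ℤ)
    (hz₀ : ∃ α β γodd γeven : {x : Fin τ → ℕ // Admissible τ d M b c s r x},
      Nonsorted α.1 β.1 ∧ IsSplit α.1 β.1 γodd.1 γeven.1 ∧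
      z₀ = QuadMove α β γodd γeven) :
    ∃ x y : {x : Fin τ → ℕ // Admissible τ d M b c s r x} → ℕ,
      (∀ j : ℕ,
        ∑ v : {x : Fin τ → ℕ // Admissible τ d M b c s r x},
          x v * (Finset.univ.filter fun k : Fin τ => v.1 k = j).card
        = ∑ v : {x : Fin τ → ℕ // Admissible τ d M b c s r x},
          y v * (Finset.univ.filter fun k : Fin τ => v.1 k = j).card) ∧
      ¬ ∃ (N : ℕ) (path : ℕ → {x : Fin τ → ℕ // Admissible τ d M b c s r x} → ℕ),
          path 0 = x ∧ path N = y ∧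
          ∀ m < N, ∃ z : {x : Fin τ → ℕ // Admissible τ d M b c s r x} → ℤ,
            (∃ α β γodd γeven : {x : Fin τ → ℕ // Admissible τ d M b c s r x},
              Nonsorted α.1 β.1 ∧ IsSplit α.1 β.1 γodd.1 γeven.1 ∧
              z = QuadMove α β γodd γeven) ∧
            z ≠ z₀ ∧
            ((∀ v, (path (m + 1) v : ℤ) - (path m v : ℤ) = z v) ∨
             (∀ v, (path (m + 1) v : ℤ) - (path m v : ℤ) = - z v)) := by
  classical
  obtain ⟨A, B, Godd, Geven, hns, hsp, hz0eq⟩ := hz₀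
  have hAB : A ≠ B := fun h => nonsorted_ne A.2.mono hns (congrArg Subtype.val h)
  have hdis := nonsorted_ne_split A.2.mono B.2.mono Godd.2.mono Geven.2.mono hns hsp
  have hAGo : A ≠ Godd := fun h => hdis.1 (congrArg Subtype.val h)
  have hAGe : A ≠ Geven := fun h => hdis.2.1 (congrArg Subtype.val h)
  refine ⟨fun v => (if v = A then 1 else 0) + (if v = B then 1 else 0),
          fun v => (if v = Godd then 1 else 0) + (if v = Geven then 1 else 0), ?_, ?_⟩
  · intro j
    simp only [add_mul, ite_mul, one_mul, zero_mul, Finset.sum_add_distrib,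
      Finset.sum_ite_eq', Finset.mem_univ, if_true]
    exact (split_count hsp j).symm
  · rintro ⟨N, path, h0, hN, hstep⟩
    rcases Nat.eq_zero_or_pos N with hN0 | hNpos
    · subst hN0
      have hxy := h0.symm.trans hN
      have := congrFun hxy A
      simp [hAB, hAGo, hAGe] at this
    · obtain ⟨z, ⟨A', B', G1, G2, hns', hsp', rfl⟩, hzne, hcase⟩ := hstep 0 hNpos
      have hAB' : A' ≠ B' := fun h => nonsorted_ne A'.2.mono hns' (congrArg Subtype.val h)
      have hdis' := nonsorted_ne_split A'.2.mono B'.2.mono G1.2.mono G2.2.mono hns' hsp'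
      have hA'G1 : A' ≠ G1 := fun h => hdis'.1 (congrArg Subtype.val h)
      have hA'G2 : A' ≠ G2 := fun h => hdis'.2.1 (congrArg Subtype.val h)
      have hB'G1 : B' ≠ G1 := fun h => hdis'.2.2.1 (congrArg Subtype.val h)
      have hB'G2 : B' ≠ G2 := fun h => hdis'.2.2.2 (congrArg Subtype.val h)
      rw [h0] at hcase
      rcases hcase with hc | hc
      · -- forward move: A', B' must both lie in {A, B}
        have hqA : QuadMove A' B' G1 G2 A' = -1 := by
          simp [QuadMove, hA'G1, hA'G2, hAB']
        have hqB : QuadMove A' B' G1 G2 B' = -1 := by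
          simp [QuadMove, hB'G1, hB'G2, hAB'.symm]
        have h1 := hc A'; rw [hqA] at h1
        have h2 := hc B'; rw [hqB] at h2
        have hA'mem : A' = A ∨ A' = B := by
          by_contra hno
          push_neg at hno
          simp [hno.1, hno.2] at h1 <;> omega
        have hB'mem : B' = A ∨ B' = B := by
          by_contra hno
          push_neg at hno
          simp [hno.1, hno.2] at h2 <;> omega
        rcases hA'mem with h1' | h1' <;> rcases hB'mem with h2' | h2'
        · exact absurd (h1'.trans h2'.symm) hAB'
        · have hms' : ((List.ofFn (A'.1 : Fin τ → ℕ) ++ List.ofFn (B'.1 : Fin τ → ℕ) : List ℕ) : Multiset ℕ)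
              = ((List.ofFn (A.1 : Fin τ → ℕ) ++ List.ofFn (B.1 : Fin τ → ℕ) : List ℕ) : Multiset ℕ) := by
            rw [h1', h2']
          obtain ⟨hG1, hG2⟩ := split_unique hsp hsp' hms'
          apply hzne
          rw [Subtype.ext hG1, Subtype.ext hG2, h1', h2', hz0eq]
        · have hms' : ((List.ofFn (A'.1 : Fin τ → ℕ) ++ List.ofFn (B'.1 : Fin τ → ℕ) : List ℕ) : Multiset ℕ)
              = ((List.ofFn (A.1 : Fin τ → ℕ) ++ List.ofFn (B.1 : Fin τ → ℕ) : List ℕ) : Multiset ℕ) := by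
            rw [h1', h2']
            exact Multiset.coe_eq_coe.mpr List.perm_append_comm
          obtain ⟨hG1, hG2⟩ := split_unique hsp hsp' hms'
          apply hzne
          rw [Subtype.ext hG1, Subtype.ext hG2, h1', h2', hz0eq]
          exact quadmove_comm _ _ _ _
        · exact absurd (h1'.trans h2'.symm) hAB'
      · -- backward move: {G1, G2} would have to be the nonsorted pair {A, B}
        rcases eq_or_ne G1 G2 with rfl | hGG
        · have hqG : QuadMove A' B' G1 G1 G1 = 2 := by
            simp [QuadMove, hA'G1.symm, hB'G1.symm]
          have h1 := hc G1; rw [hqG] at h1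
          rcases eq_or_ne G1 A with hx | hx <;> rcases eq_or_ne G1 B with hy | hy
          · exact hAB (hx.symm.trans hy)
          · simp [hx, hy, hAB] at h1 <;> omega
          · simp [hx, hy, Ne.symm hAB] at h1 <;> omega
          · simp [hx, hy] at h1 <;> omega
        · have hqG1 : QuadMove A' B' G1 G2 G1 = 1 := by
            simp [QuadMove, hA'G1.symm, hB'G1.symm, hGG]
          have hqG2 : QuadMove A' B' G1 G2 G2 = 1 := by
            simp [QuadMove, hA'G2.symm, hB'G2.symm, hGG.symm]
          have h1 := hc G1; rw [hqG1] at h1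
          have h2 := hc G2; rw [hqG2] at h2
          have hG1m : G1 = A ∨ G1 = B := by
            by_contra hno
            push_neg at hno
            simp [hno.1, hno.2] at h1 <;> omega
          have hG2m : G2 = A ∨ G2 = B := by
            by_contra hno
            push_neg at hno
            simp [hno.1, hno.2] at h2 <;> omega
          have hord := split_ordered hsp'
          rcases hG1m with h1' | h1' <;> rcases hG2m with h2' | h2'
          · exact hGG (h1'.trans h2'.symm)
          · rw [h1', h2'] at hord
            exact hns (Or.inl hord)
          · rw [h1', h2'] at hord
            exact hns (Or.inr hord)
          · exact hGG (h1'.trans h2'.symm)
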